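/- arXiv:1507.04387 — 2 statements merged into one kernel-verified Lean document; each statement's English description precedes it below -/
import Mathlib

section
/- Fix k₁ ∈ ℝ, k₂ > 0, λ₁ > 0, c > r > 0. For A > 0 let γ₁(A), γ̄₁(A) be as in the scaling γ₁ = a₁/A, γ̄₁ = ā₁/A, and g_A(x) = γ₁(A)e^{γ̄₁(A)x} + γ̄₁(A)e^{−γ₁(A)x}. Let b(A) > 0 be the unique solution of g_A(−b) = g_A(0)·c/r. Then b(A) = kA for some constant k > 0 independent of A; i.e., the optimal barrier is linear in the asset size. -/
open Real

theorem barrier_linear_in_asset_size (k1 k2 lam1 c r : ℝ) (hk2 : 0 < k2) (hlam : 0 < lam1)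
    (hr : 0 < r) (hcr : r < c)
    (a1 abar1 : ℝ)
    (ha1 : a1 = (Real.sqrt (k1 ^ 2 + 2 * k2 ^ 2 * lam1) + k1) / k2 ^ 2)
    (habar1 : abar1 = (Real.sqrt (k1 ^ 2 + 2 * k2 ^ 2 * lam1) - k1) / k2 ^ 2)
    (gamma1 gammabar1 : ℝ → ℝ)
    (hgamma1 : ∀ A, gamma1 A = a1 / A) (hgammabar1 : ∀ A, gammabar1 A = abar1 / A)
    (g : ℝ → ℝ → ℝ)
    (hg : ∀ A x, g A x = gamma1 A * Real.exp (gammabar1 A * x) +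
      gammabar1 A * Real.exp (-(gamma1 A) * x))
    (b : ℝ → ℝ)
    (hb : ∀ A : ℝ, 0 < A → 0 < b A ∧ g A (-(b A)) = g A 0 * (c / r)) :
    ∃ k : ℝ, 0 < k ∧ ∀ A : ℝ, 0 < A → b A = k * A := by
  -- positivity of a1, abar1
  have hs : |k1| < Real.sqrt (k1 ^ 2 + 2 * k2 ^ 2 * lam1) := by
    have h1 : k1 ^ 2 < k1 ^ 2 + 2 * k2 ^ 2 * lam1 := by nlinarith [pow_pos hk2 2]
    calc |k1| = Real.sqrt (k1 ^ 2) := by rw [Real.sqrt_sq_eq_abs]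
    _ < _ := Real.sqrt_lt_sqrt (sq_nonneg _) h1
  have habs1 := neg_abs_le k1
  have habs2 := le_abs_self k1
  have hk2sq : (0:ℝ) < k2 ^ 2 := by positivity
  have ha1pos : 0 < a1 := by
    rw [ha1]; apply div_pos _ hk2sq; linarith
  have habar1pos : 0 < abar1 := by
    rw [habar1]; apply div_pos _ hk2sq; linarith
  -- the scaled function H
  set H : ℝ → ℝ := fun y => a1 * Real.exp (-(abar1 * y)) + abar1 * Real.exp (a1 * y) with hH
  have hHd : ∀ y, HasDerivAt H (a1 * abar1 * (Real.exp (a1 * y) - Real.exp (-(abar1 * y)))) y := by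
    intro y
    have h1 : HasDerivAt (fun y : ℝ => -(abar1 * y)) (-abar1) y := by
      have := ((hasDerivAt_id y).const_mul abar1).neg; simp only [mul_one] at this; exact this
    have h3 : HasDerivAt (fun y : ℝ => a1 * y) a1 y := by
      simpa using (hasDerivAt_id y).const_mul a1
    have h2 := (h1.exp.const_mul a1).add (h3.exp.const_mul abar1)
    refine h2.congr_deriv ?_
    ring
  have hmono : StrictMonoOn H (Set.Ici (0:ℝ)) := by
    apply strictMonoOn_of_deriv_pos (convex_Ici 0)
    · exact ((continuous_const.mul ((continuous_const.mul continuous_id).neg.rexp)).add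
        (continuous_const.mul ((continuous_const.mul continuous_id).rexp))).continuousOn
    · intro y hy
      rw [interior_Ici] at hy
      rw [(hHd y).deriv]
      have : Real.exp (-(abar1 * y)) < Real.exp (a1 * y) := by
        apply Real.exp_lt_exp.2; nlinarith [hy.out]
      have := mul_pos ha1pos habar1pos
      nlinarith
  -- key: for each A > 0, H (b A / A) = (a1 + abar1) * (c / r)
  have hkey : ∀ A : ℝ, 0 < A → H (b A / A) = (a1 + abar1) * (c / r) := by
    intro A hA
    obtain ⟨hbpos, heq⟩ := hb A hA
    rw [hg, hg, hgamma1, hgammabar1] at heq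
    have hA' : A ≠ 0 := ne_of_gt hA
    have : A * (a1 / A * Real.exp (abar1 / A * -b A) + abar1 / A * Real.exp (-(a1 / A) * -b A))
        = A * (a1 / A * Real.exp (abar1 / A * 0) + abar1 / A * Real.exp (-(a1 / A) * 0)) * (c / r) := by
      rw [heq]; ring
    simp only [mul_zero, Real.exp_zero, mul_one] at this
    rw [hH]
    simp only []
    have e1 : abar1 / A * -b A = -(abar1 * (b A / A)) := by field_simp
    have e2 : -(a1 / A) * -b A = a1 * (b A / A) := by field_simp
    rw [e1, e2] at this
    have e3 : A * (a1 / A * Real.exp (-(abar1 * (b A / A))) + abar1 / A * Real.exp (a1 * (b A / A)))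
        = a1 * Real.exp (-(abar1 * (b A / A))) + abar1 * Real.exp (a1 * (b A / A)) := by
      field_simp
    have e4 : A * (a1 / A + abar1 / A) * (c / r) = (a1 + abar1) * (c / r) := by
      field_simp
    rw [e3, e4] at this
    exact this
  have h1 := hb 1 one_pos
  refine ⟨b 1, h1.1, fun A hA => ?_⟩
  have hmemA : b A / A ∈ Set.Ici (0:ℝ) := le_of_lt (div_pos (hb A hA).1 hA)
  have hmem1 : b 1 ∈ Set.Ici (0:ℝ) := le_of_lt h1.1
  have heq : H (b A / A) = H (b 1) := by
    rw [hkey A hA]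
    have := hkey 1 one_pos
    simpa using this.symm
  have := hmono.injOn hmemA hmem1 heq
  field_simp at this
  linarith [this]
end

section
/- Let b > 0, r, c > 0 with c > r, γ₁, γ̄₁ > 0, g(x) = γ₁ e^{γ̄₁ x} + γ̄₁ e^{−γ₁ x}, and suppose g(−b) = g(0)c/r. Define v₁(x) = (r/g′(b)) g(x) + (c/g′(−b)) g(x−b) for 0 ≤ x ≤ b. Then v₁′ is continuous on [0,b] and for all x ∈ [0,b], r ≤ v₁′(x) ≤ c. -/
open Real Set

set_option maxHeartbeats 800000

theorem v1_deriv_bounds (b r c gamma1 gammabar1 : ℝ) (hb : 0 < b)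
    (hr : 0 < r) (hcr : r < c)
    (h1 : 0 < gamma1) (h2 : 0 < gammabar1)
    (g : ℝ → ℝ)
    (hg : ∀ x, g x = gamma1 * Real.exp (gammabar1 * x) + gammabar1 * Real.exp (-gamma1 * x))
    (hbar : g (-b) = g 0 * (c / r))
    (v1 : ℝ → ℝ)
    (hv1 : ∀ x, v1 x = r / deriv g b * g x + c / deriv g (-b) * g (x - b)) :
    ContinuousOn (deriv v1) (Set.Icc 0 b) ∧
      ∀ x ∈ Set.Icc (0 : ℝ) b, r ≤ deriv v1 x ∧ deriv v1 x ≤ c := by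
  have hgE : g = fun x => gamma1 * Real.exp (gammabar1 * x) + gammabar1 * Real.exp (-gamma1 * x) :=
    funext hg
  subst hgE
  -- first derivative of g
  have hg' : ∀ x : ℝ, HasDerivAt
      (fun x => gamma1 * Real.exp (gammabar1 * x) + gammabar1 * Real.exp (-gamma1 * x))
      (gamma1 * gammabar1 * (Real.exp (gammabar1 * x) - Real.exp (-gamma1 * x))) x := by
    intro x
    have hA : HasDerivAt (fun x : ℝ => gammabar1 * x) gammabar1 x := by
      simpa using (hasDerivAt_id x).const_mul gammabar1
    have hB : HasDerivAt (fun x : ℝ => -gamma1 * x) (-gamma1) x := by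
      simpa using (hasDerivAt_id x).const_mul (-gamma1)
    have := (hA.exp.const_mul gamma1).add (hB.exp.const_mul gammabar1)
    exact this.congr_deriv (by ring)
  set D : ℝ → ℝ := fun x => gamma1 * gammabar1 * (Real.exp (gammabar1 * x) - Real.exp (-gamma1 * x))
    with hD
  -- second derivative function
  have hD' : ∀ x : ℝ, HasDerivAt D
      (gamma1 * gammabar1 * (gammabar1 * Real.exp (gammabar1 * x) + gamma1 * Real.exp (-gamma1 * x))) x := by
    intro x
    have hA : HasDerivAt (fun x : ℝ => gammabar1 * x) gammabar1 x := by
      simpa using (hasDerivAt_id x).const_mul gammabar1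
    have hB : HasDerivAt (fun x : ℝ => -gamma1 * x) (-gamma1) x := by
      simpa using (hasDerivAt_id x).const_mul (-gamma1)
    have := (hA.exp.sub hB.exp).const_mul (gamma1 * gammabar1)
    exact this.congr_deriv (by ring)
  set D2 : ℝ → ℝ := fun x =>
      gamma1 * gammabar1 * (gammabar1 * Real.exp (gammabar1 * x) + gamma1 * Real.exp (-gamma1 * x))
    with hD2
  have hderivg : ∀ x : ℝ, deriv (fun x => gamma1 * Real.exp (gammabar1 * x)
      + gammabar1 * Real.exp (-gamma1 * x)) x = D x := fun x => (hg' x).deriv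
  -- positivity of key exponentials
  have hDb : 0 < D b := by
    have : Real.exp (-gamma1 * b) < Real.exp (gammabar1 * b) :=
      Real.exp_lt_exp.mpr (by nlinarith)
    have := sub_pos.mpr this
    positivity
  have hDmb : D (-b) < 0 := by
    have h : Real.exp (gammabar1 * (-b)) < Real.exp (-gamma1 * (-b)) :=
      Real.exp_lt_exp.mpr (by nlinarith)
    have hpa : 0 < gamma1 * gammabar1 := by positivity
    simp only [hD]
    nlinarith [h, hpa]
  have hDbne : D b ≠ 0 := ne_of_gt hDb
  have hDmbne : D (-b) ≠ 0 := ne_of_lt hDmb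
  -- rewrite v1
  have hv1E : v1 = fun x => r / D b * (gamma1 * Real.exp (gammabar1 * x)
      + gammabar1 * Real.exp (-gamma1 * x)) + c / D (-b) * (gamma1 * Real.exp (gammabar1 * (x - b))
      + gammabar1 * Real.exp (-gamma1 * (x - b))) := by
    funext x
    rw [hv1 x, hderivg b, hderivg (-b)]
  subst hv1E
  -- derivative of v1
  have hv1' : ∀ x : ℝ, HasDerivAt (fun x => r / D b * (gamma1 * Real.exp (gammabar1 * x)
      + gammabar1 * Real.exp (-gamma1 * x)) + c / D (-b) * (gamma1 * Real.exp (gammabar1 * (x - b))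
      + gammabar1 * Real.exp (-gamma1 * (x - b))))
      (r / D b * D x + c / D (-b) * D (x - b)) x := by
    intro x
    have hsub : HasDerivAt (fun x : ℝ => x - b) 1 x := (hasDerivAt_id x).sub_const b
    have h1' := (hg' x).const_mul (r / D b)
    have h2' := ((hg' (x - b)).comp x hsub).const_mul (c / D (-b))
    have := h1'.add h2'
    exact this.congr_deriv (by ring)
  have hdv1 : deriv (fun x => r / D b * (gamma1 * Real.exp (gammabar1 * x)
      + gammabar1 * Real.exp (-gamma1 * x)) + c / D (-b) * (gamma1 * Real.exp (gammabar1 * (x - b))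
      + gammabar1 * Real.exp (-gamma1 * (x - b))))
      = fun x => r / D b * D x + c / D (-b) * D (x - b) :=
    funext fun x => (hv1' x).deriv
  rw [hdv1]
  set DV : ℝ → ℝ := fun x => r / D b * D x + c / D (-b) * D (x - b) with hDV
  -- DV is continuous
  have hDVcont : Continuous DV := by
    apply Continuous.add
    · exact continuous_const.mul (continuous_const.mul
        ((Real.continuous_exp.comp (continuous_const.mul continuous_id)).sub
          (Real.continuous_exp.comp (continuous_const.mul continuous_id))))
    · apply continuous_const.mul
      apply continuous_const.mul
      apply Continuous.sub
      · exact Real.continuous_exp.comp (continuous_const.mul (continuous_id.sub continuous_const))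
      · exact Real.continuous_exp.comp (continuous_const.mul (continuous_id.sub continuous_const))
  -- derivative of DV
  have hDV' : ∀ x : ℝ, HasDerivAt DV (r / D b * D2 x + c / D (-b) * D2 (x - b)) x := by
    intro x
    have hsub : HasDerivAt (fun x : ℝ => x - b) 1 x := (hasDerivAt_id x).sub_const b
    have h1' := (hD' x).const_mul (r / D b)
    have h2' := ((hD' (x - b)).comp x hsub).const_mul (c / D (-b))
    have := h1'.add h2'
    rw [hDV]
    exact this.congr_deriv (by simp only [hD2]; ring)
  -- barrier condition rewritten
  have hc' : c = r * (gamma1 * (Real.exp (gammabar1 * b))⁻¹ + gammabar1 * Real.exp (gamma1 * b))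
      / (gamma1 + gammabar1) := by
    have hA : Real.exp (gammabar1 * (-b)) = (Real.exp (gammabar1 * b))⁻¹ := by
      rw [← Real.exp_neg]; ring_nf
    have hB : Real.exp (-gamma1 * (-b)) = Real.exp (gamma1 * b) := by ring_nf
    simp only [hA, hB, mul_zero, Real.exp_zero, mul_one] at hbar
    have hpa : gamma1 + gammabar1 ≠ 0 := by positivity
    field_simp at hbar ⊢
    linarith [hbar]
  -- key concavity inequality
  have hkey : ∀ x : ℝ, x ≤ b → r / D b * D2 x + c / D (-b) * D2 (x - b) ≤ 0 := by
    intro x hxb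
    have e1 : Real.exp (gammabar1 * (x - b))
        = Real.exp (gammabar1 * x) * (Real.exp (gammabar1 * b))⁻¹ := by
      rw [← Real.exp_neg, ← Real.exp_add]; ring_nf
    have e2 : Real.exp (-gamma1 * (x - b)) = Real.exp (-gamma1 * x) * Real.exp (gamma1 * b) := by
      rw [← Real.exp_add]; ring_nf
    have e3 : Real.exp (-gamma1 * -b) = Real.exp (gamma1 * b) := by ring_nf
    have e4 : Real.exp (gammabar1 * -b) = (Real.exp (gammabar1 * b))⁻¹ := by
      rw [← Real.exp_neg]; ring_nf
    have e5 : Real.exp (-gamma1 * b) = (Real.exp (gamma1 * b))⁻¹ := by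
      rw [← Real.exp_neg]; ring_nf
    have hmono : Real.exp (gammabar1 * x)
        ≤ Real.exp (-gamma1 * x) * Real.exp (gammabar1 * b) * Real.exp (gamma1 * b) := by
      rw [← Real.exp_add, ← Real.exp_add]
      exact Real.exp_le_exp.mpr (by nlinarith)
    set u := Real.exp (gammabar1 * x) with hu
    set w := Real.exp (-gamma1 * x) with hw
    set B1 := Real.exp (gammabar1 * b) with hB1
    set B2 := Real.exp (gamma1 * b) with hB2
    have hupos : 0 < u := Real.exp_pos _
    have hwpos : 0 < w := Real.exp_pos _
    have hB1pos : 0 < B1 := Real.exp_pos _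
    have hB2pos : 0 < B2 := Real.exp_pos _
    have hB1gt : 1 < B1 := by rw [hB1]; exact Real.one_lt_exp_iff.mpr (by positivity)
    have hB2gt : 1 < B2 := by rw [hB2]; exact Real.one_lt_exp_iff.mpr (by positivity)
    have hB1ne : B1 ≠ 0 := ne_of_gt hB1pos
    have hB2ne : B2 ≠ 0 := ne_of_gt hB2pos
    have hg1ne : gamma1 ≠ 0 := ne_of_gt h1
    have hg2ne : gammabar1 ≠ 0 := ne_of_gt h2
    have hKpos : 0 < B1 * B2 - 1 := by nlinarith
    have hKne : B1 * B2 - 1 ≠ 0 := ne_of_gt hKpos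
    have hDbE : D b = gamma1 * gammabar1 * ((B1 * B2 - 1) / B2) := by
      simp only [hD, e5]
      field_simp
      rw [hB1]; ring
    have hDmbE : D (-b) = -(gamma1 * gammabar1 * ((B1 * B2 - 1) / B1)) := by
      simp only [hD, e3, e4]
      field_simp
      try ring
    have hD2x : D2 x = gamma1 * gammabar1 * (gammabar1 * u + gamma1 * w) := by
      simp only [hD2]
      rfl
    have hD2xb : D2 (x - b) = gamma1 * gammabar1 * (gammabar1 * (u * B1⁻¹) + gamma1 * (w * B2)) := by
      simp only [hD2, e1, e2]
    rw [hD2x, hD2xb, hDbE, hDmbE]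
    have hfrac : r / (gamma1 * gammabar1 * ((B1 * B2 - 1) / B2))
          * (gamma1 * gammabar1 * (gammabar1 * u + gamma1 * w))
        + c / (-(gamma1 * gammabar1 * ((B1 * B2 - 1) / B1)))
          * (gamma1 * gammabar1 * (gammabar1 * (u * B1⁻¹) + gamma1 * (w * B2)))
        = (r * B2 * (gamma1 * gammabar1 * (gammabar1 * u + gamma1 * w))
            - c * B1 * (gamma1 * gammabar1 * (gammabar1 * (u * B1⁻¹) + gamma1 * (w * B2))))
          / (gamma1 * gammabar1 * (B1 * B2 - 1)) := by
      field_simp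
      ring
    rw [hfrac]
    apply div_nonpos_of_nonpos_of_nonneg
    · have hpa : gamma1 + gammabar1 ≠ 0 := by positivity
      have hfac : c * B1 * (gamma1 * gammabar1 * (gammabar1 * (u * B1⁻¹) + gamma1 * (w * B2)))
          - r * B2 * (gamma1 * gammabar1 * (gammabar1 * u + gamma1 * w))
          = (r * gamma1 ^ 2 * gammabar1 ^ 2 * (B1 * B2 - 1) / (gamma1 + gammabar1))
            * ((w * B1 * B2 - u) * B1⁻¹) := by
        rw [hc']
        field_simp
        ring
      have hpos : 0 < r * gamma1 ^ 2 * gammabar1 ^ 2 * (B1 * B2 - 1) / (gamma1 + gammabar1) :=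
        div_pos (mul_pos (by positivity) hKpos) (by positivity)
      have hnonneg : 0 ≤ (r * gamma1 ^ 2 * gammabar1 ^ 2 * (B1 * B2 - 1) / (gamma1 + gammabar1))
          * ((w * B1 * B2 - u) * B1⁻¹) :=
        mul_nonneg hpos.le (mul_nonneg (by linarith [hmono]) (by positivity))
      linarith [hfac, hnonneg]
    · exact mul_nonneg (by positivity) hKpos.le
  -- antitone
  have hanti : AntitoneOn DV (Set.Icc 0 b) := by
    apply antitoneOn_of_deriv_nonpos (convex_Icc 0 b) hDVcont.continuousOn
    · intro x _
      exact (hDV' x).differentiableAt.differentiableWithinAt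
    · intro x hx
      rw [interior_Icc] at hx
      rw [(hDV' x).deriv]
      exact hkey x hx.2.le
  -- endpoint values
  have hD0 : D 0 = 0 := by simp [hD]
  have hDV0 : DV 0 = c := by
    rw [hDV]
    show r / D b * D 0 + c / D (-b) * D (0 - b) = c
    rw [hD0, zero_sub, mul_zero, zero_add, div_mul_cancel₀ _ hDmbne]
  have hDVb : DV b = r := by
    rw [hDV]
    show r / D b * D b + c / D (-b) * D (b - b) = r
    rw [sub_self, hD0, mul_zero, add_zero, div_mul_cancel₀ _ hDbne]
  refine ⟨hDVcont.continuousOn, fun x hx => ?_⟩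
  constructor
  · have := hanti hx (Set.right_mem_Icc.mpr hb.le) hx.2
    rw [hDVb] at this
    exact this
  · have := hanti (Set.left_mem_Icc.mpr hb.le) hx hx.1
    rw [hDV0] at this
    exact this
end
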